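/- Under the hypotheses of the no-extra-tape construction (Proposition 2 of the paper): ℓ satisfies the graph weight conditions, the interpolation conditions at vertices and edge midpoints, and is affine on each corner S_v; and the initial point is x₀ = e_{v₀} for the initial Turing-machine state v₀. Then the conditional gradient iterates with unit learning rate satisfy x_k = e_{v_k} for k ≤ K, where v₀,…,v_K are the consecutive states of the Turing machine execution with v_K a halting state. -/

import Mathlib

open Finset

/-- A function satisfying the two-point affinity condition on a convex set is
affine on finite convex combinations. -/
lemma affine_sum {α : Type*} [DecidableEq α]
    {C : Set (α → ℝ)} (hC : Convex ℝ C) (f : (α → ℝ) → ℝ)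
    (hf : ∀ x ∈ C, ∀ y ∈ C, ∀ l ∈ Set.Icc (0:ℝ) 1,
      f ((1 - l) • x + l • y) = (1 - l) * f x + l * f y)
    (s : Finset α) :
    ∀ (w : α → ℝ) (p : α → (α → ℝ)), (∀ i ∈ s, 0 ≤ w i) → (∑ i ∈ s, w i = 1) →
      (∀ i ∈ s, p i ∈ C) → f (∑ i ∈ s, w i • p i) = ∑ i ∈ s, w i * f (p i) := by
  induction s using Finset.induction with
  | empty => intro w p _ hsum _; simp at hsum
  | insert _ _ ha =>
    rename_i a s ih0
    intro w p hw hsum hp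
    rw [Finset.sum_insert ha] at hsum
    have ht0 : 0 ≤ ∑ i ∈ s, w i :=
      Finset.sum_nonneg fun i hi => hw i (Finset.mem_insert_of_mem hi)
    rcases eq_or_lt_of_le ht0 with h0 | hpos
    · have hz : ∀ i ∈ s, w i = 0 :=
        (Finset.sum_eq_zero_iff_of_nonneg fun i hi =>
          hw i (Finset.mem_insert_of_mem hi)).mp h0.symm
      have hwa : w a = 1 := by rw [← h0] at hsum; linarith
      rw [Finset.sum_insert ha, Finset.sum_insert ha]
      have e1 : ∑ i ∈ s, w i • p i = 0 :=
        Finset.sum_eq_zero fun i hi => by rw [hz i hi, zero_smul]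
      have e2 : ∑ i ∈ s, w i * f (p i) = 0 :=
        Finset.sum_eq_zero fun i hi => by rw [hz i hi, zero_mul]
      rw [e1, e2, hwa, one_smul, add_zero, one_mul, add_zero]
    · set t := ∑ i ∈ s, w i with htt
      have hwa : w a = 1 - t := by linarith
      have ht1 : t ≤ 1 := by have := hw a (Finset.mem_insert_self a s); linarith
      have hq : (∑ i ∈ s, (w i / t) • p i) ∈ C := by
        apply hC.sum_mem
        · exact fun i hi => div_nonneg (hw i (Finset.mem_insert_of_mem hi)) ht0
        · rw [← Finset.sum_div, ← htt, div_self (ne_of_gt hpos)]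
        · exact fun i hi => hp i (Finset.mem_insert_of_mem hi)
      have hsplit : ∑ i ∈ insert a s, w i • p i
          = (1 - t) • p a + t • ∑ i ∈ s, (w i / t) • p i := by
        rw [Finset.sum_insert ha, hwa, Finset.smul_sum]
        congr 1
        apply Finset.sum_congr rfl
        intro i hi
        rw [smul_smul, mul_div_cancel₀ _ (ne_of_gt hpos)]
      rw [hsplit, hf (p a) (hp a (Finset.mem_insert_self a s)) _ hq t ⟨ht0, ht1⟩,
        ih0 (fun i => w i / t) p
          (fun i hi => div_nonneg (hw i (Finset.mem_insert_of_mem hi)) ht0)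
          (by rw [← Finset.sum_div, ← htt, div_self (ne_of_gt hpos)])
          (fun i hi => hp i (Finset.mem_insert_of_mem hi)),
        Finset.sum_insert ha, hwa, Finset.mul_sum]
      congr 1
      apply Finset.sum_congr rfl
      intro i hi
      rw [← mul_assoc, mul_div_cancel₀ _ (ne_of_gt hpos)]


/-- Tracing a Turing machine by conditional gradient descent (no extra tape
variable): with the loss `ℓ` satisfying the graph-weight conditions, the
interpolation conditions at vertices and edge midpoints, and affine on each
corner, the conditional gradient iterates with unit learning rate started at
`x₀ = e_{v₀}` satisfy `x_k = e_{v_k}` for `k ≤ K`, where `v₀, …, v_K` are the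
consecutive states of the Turing machine execution. -/
theorem stmt_15 {V : Type*} [Fintype V] [DecidableEq V]
    (e : V → (V → ℝ)) (he : e = fun u => Pi.single u 1)
    (E : V → V → Prop)
    (ω : V → ℝ) (ωe : V → V → ℝ) (B : ℝ)
    (hsym : ∀ a b, ωe a b = ωe b a)
    (h1 : ∀ a b, E a b → ω a > ωe a b)
    (h2 : ∀ a b c, E a b → E b c → ωe a b > ωe b c)
    (h3 : ∀ a b, a ≠ b → ¬ E a b → ¬ E b a → ωe a b = B)
    (hBe : ∀ a b, E a b → ωe a b < B)
    (hBv : ∀ a, ω a < B)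
    -- the computation is deterministic and never stays in place
    (hdet : ∀ a b c, E a b → E a c → b = c)
    (hirr : ∀ a, ¬ E a a)
    (ℓ : (V → ℝ) → ℝ)
    (hval : ∀ u, ℓ (e u) = ω u)
    (hmid : ∀ a b, a ≠ b → ℓ ((1/2 : ℝ) • (e a + e b)) = ωe a b)
    (haff : ∀ u : V,
      ∀ x ∈ convexHull ℝ (({e u} : Set (V → ℝ)) ∪
        {p | ∃ t, t ≠ u ∧ p = (1/2 : ℝ) • (e u + e t)}),
      ∀ y ∈ convexHull ℝ (({e u} : Set (V → ℝ)) ∪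
        {p | ∃ t, t ≠ u ∧ p = (1/2 : ℝ) • (e u + e t)}),
      ∀ l ∈ Set.Icc (0:ℝ) 1,
      ℓ ((1 - l) • x + l • y) = (1 - l) * ℓ x + l * ℓ y)
    -- the Turing machine execution `v₀, …, v_K`
    (v : ℕ → V) (K : ℕ) (hvE : ∀ k, k < K → E (v k) (v (k + 1)))
    -- the conditional gradient iterates with unit learning rate:
    -- `x_{k+1} = x_k + (argmin_{y ∈ S} ∂_{y − x_k} ℓ(x_k) − x_k)`
    (x : ℕ → (V → ℝ)) (hx0 : x 0 = e (v 0))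
    (g : ℕ → (V → ℝ) → ℝ)
    (hg : ∀ k, ∀ z ∈ convexHull ℝ (Set.range e),
      Filter.Tendsto (fun h : ℝ => (ℓ ((1 - h) • x k + h • z) - ℓ (x k)) / h)
        (nhdsWithin 0 (Set.Ioi 0)) (nhds (g k z)))
    (hupd : ∀ k, x (k + 1) ∈ convexHull ℝ (Set.range e) ∧
      ∀ z ∈ convexHull ℝ (Set.range e), g k (x (k + 1)) ≤ g k z) :
    ∀ k ≤ K, x k = e (v k) := by
  -- the simplex
  have hS : convexHull ℝ (Set.range e) = stdSimplex ℝ V := by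
    rw [he]
    have hfe : (fun u : V => Pi.single u (1:ℝ))
        = (fun i j => @ite ℝ (i = j) (Classical.propDecidable (i = j)) 1 0) := by
      funext i j
      rw [Pi.single_apply]
      by_cases hij : i = j
      · subst hij; simp
      · simp only [if_neg hij, if_neg (fun h : j = i => hij h.symm)]
    rw [hfe]
    convert convexHull_basis_eq_stdSimplex (R := ℝ) V
  -- decomposition of a simplex point in the basis
  have hzdec : ∀ z : V → ℝ, ∑ t, z t • e t = z := by
    intro z
    funext s
    rw [Finset.sum_apply]
    simp [he, Pi.single_apply, mul_ite]
  -- main step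
  have step : ∀ k, k < K → x k = e (v k) → x (k + 1) = e (v (k + 1)) := by
    intro k hk hxk
    set u := v k with hu
    set w := v (k + 1) with hw
    have huw : E u w := hvE k hk
    have hneuw : u ≠ w := fun hh => hirr u (by rw [hh] at huw ⊢; exact huw)
    set a : V → ℝ := fun t => if t = u then ω u else ωe u t with ha
    -- the directional derivative formula
    have hgf : ∀ z ∈ convexHull ℝ (Set.range e),
        g k z = 2 * ((∑ t, z t * a t) - ω u) := by
      intro z hz
      have hz' : z ∈ stdSimplex ℝ V := hS ▸ hz
      obtain ⟨hz0, hz1⟩ := hz'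
      have hzu1 : z u ≤ 1 := by
        rw [← hz1]
        exact Finset.single_le_sum (fun i _ => hz0 i) (Finset.mem_univ u)
      have h1z : ∑ t ∈ Finset.univ.erase u, z t = 1 - z u := by
        rw [Finset.sum_erase_eq_sub (Finset.mem_univ u), hz1]
      -- the loss along the segment, for small h
      have key : ∀ h : ℝ, h ∈ Set.Ioo (0:ℝ) (1/2) →
          ℓ ((1 - h) • x k + h • z) = ω u + h * (2 * ((∑ t, z t * a t) - ω u)) := by
        intro h hh
        obtain ⟨hh0, hh2⟩ := hh
        set C : Set (V → ℝ) := convexHull ℝ (({e u} : Set (V → ℝ)) ∪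
          {p | ∃ t, t ≠ u ∧ p = (1/2 : ℝ) • (e u + e t)}) with hC
        set W : V → ℝ := fun t => if t = u then 1 - 2*h*(1 - z u) else 2*h*z t with hW
        set P : V → (V → ℝ) := fun t => if t = u then e u else (1/2 : ℝ) • (e u + e t) with hP
        have hWu : W u = 1 - 2*h*(1 - z u) := if_pos rfl
        have hPu : P u = e u := if_pos rfl
        have hWt : ∀ t ∈ Finset.univ.erase u, W t = 2*h*z t := by
          intro t ht; exact if_neg (Finset.ne_of_mem_erase ht)
        have hPt : ∀ t ∈ Finset.univ.erase u, P t = (1/2 : ℝ) • (e u + e t) := by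
          intro t ht; exact if_neg (Finset.ne_of_mem_erase ht)
        have hW0 : ∀ t ∈ Finset.univ, 0 ≤ W t := by
          intro t _
          by_cases htu : t = u
          · rw [htu, hWu]; nlinarith [hz0 u]
          · rw [hW]; simp only [if_neg htu]
            have := hz0 t; positivity
        have hWsum : ∑ t, W t = 1 := by
          rw [← Finset.add_sum_erase _ _ (Finset.mem_univ u), hWu,
            Finset.sum_congr rfl hWt, ← Finset.mul_sum, h1z]
          ring
        have hPC : ∀ t ∈ Finset.univ, P t ∈ C := by
          intro t _
          by_cases htu : t = u
          · rw [htu, hPu]; exact subset_convexHull _ _ (Or.inl rfl)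
          · rw [hP]; simp only [if_neg htu]
            exact subset_convexHull _ _ (Or.inr ⟨t, htu, rfl⟩)
        have hsum_eq : ∑ t, W t • P t = (1 - h) • x k + h • z := by
          rw [hxk]
          have e1 : ∑ t, W t • P t
              = W u • P u + ∑ t ∈ Finset.univ.erase u, W t • P t :=
            (Finset.add_sum_erase _ _ (Finset.mem_univ u)).symm
          have e2 : ∑ t ∈ Finset.univ.erase u, W t • P t
              = ∑ t ∈ Finset.univ.erase u, ((h * z t) • e u + (h * z t) • e t) := by
            apply Finset.sum_congr rfl
            intro t ht
            rw [hWt t ht, hPt t ht]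
            module
          have e3 : ∑ t ∈ Finset.univ.erase u, ((h * z t) • e u + (h * z t) • e t)
              = (h * (1 - z u)) • e u + h • (z - z u • e u) := by
            rw [Finset.sum_add_distrib, ← Finset.sum_smul, ← Finset.mul_sum, h1z]
            congr 1
            simp_rw [mul_smul]
            rw [← Finset.smul_sum, Finset.sum_erase_eq_sub (Finset.mem_univ u), hzdec z]
          rw [e1, e2, e3, hWu, hPu]
          module
        have hval2 : ℓ (∑ t, W t • P t) = ∑ t, W t * ℓ (P t) :=
          affine_sum (convex_convexHull ℝ _) ℓ (haff u) Finset.univ W P hW0 hWsum hPC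
        have hlP : ∀ t, ℓ (P t) = a t := by
          intro t
          by_cases htu : t = u
          · rw [htu, hPu, hval, ha]; simp
          · rw [hP, ha]; simp only [if_neg htu]
            exact hmid u t (Ne.symm htu)
        rw [← hsum_eq, hval2]
        simp_rw [hlP]
        rw [← Finset.add_sum_erase _ (fun t => W t * a t) (Finset.mem_univ u), hWu,
          Finset.sum_congr rfl (fun t ht => by rw [hWt t ht]),
          ← Finset.add_sum_erase _ (fun t => z t * a t) (Finset.mem_univ u)]
        have hau : a u = ω u := if_pos rfl
        have : ∑ t ∈ Finset.univ.erase u, 2*h*z t * a t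
            = 2*h* ∑ t ∈ Finset.univ.erase u, z t * a t := by
          rw [Finset.mul_sum]; apply Finset.sum_congr rfl; intro t ht; ring
        rw [this, hau]
        have hzu : z u * ω u = z u * ω u := rfl
        ring
      -- limit identification
      have hconst : Filter.Tendsto (fun h : ℝ => (ℓ ((1 - h) • x k + h • z) - ℓ (x k)) / h)
          (nhdsWithin 0 (Set.Ioi 0)) (nhds (2 * ((∑ t, z t * a t) - ω u))) := by
        apply Filter.Tendsto.congr' _ tendsto_const_nhds
        filter_upwards [Ioo_mem_nhdsGT_of_mem (by constructor <;> norm_num :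
            (0:ℝ) ∈ Set.Ico (0:ℝ) (1/2))] with h hh
        rw [key h hh, hxk, hval]
        have hne0 : h ≠ 0 := ne_of_gt hh.1
        field_simp
        ring
      exact tendsto_nhds_unique (hg k z hz) hconst
    -- the minimization step
    obtain ⟨hx'S, hmin⟩ := hupd k
    have hew : e w ∈ convexHull ℝ (Set.range e) := subset_convexHull _ _ ⟨w, rfl⟩
    have hm := hmin (e w) hew
    rw [hgf _ hx'S, hgf _ hew] at hm
    have hx's : x (k+1) ∈ stdSimplex ℝ V := hS ▸ hx'S
    obtain ⟨hx0', hx1'⟩ := hx's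
    have hewsum : ∑ t, (e w) t * a t = a w := by
      rw [he]
      simp only [Pi.single_apply, ite_mul, one_mul, zero_mul]
      rw [Finset.sum_ite_eq' _ w a]
      simp
    rw [hewsum] at hm
    have hsle : ∑ t, x (k+1) t * a t ≤ a w := by linarith
    have hgt : ∀ t, t ≠ w → a w < a t := by
      intro t htw
      have haw : a w = ωe u w := if_neg (Ne.symm hneuw)
      by_cases htu : t = u
      · rw [htu, haw, ha]; simp only [if_pos rfl]
        exact h1 u w huw
      · rw [haw, ha]; simp only [if_neg htu]
        by_cases hEtu : E t u
        · rw [hsym u t]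
          exact h2 t u w hEtu huw
        · have hEut : ¬ E u t := fun hh => htw (hdet u w t huw hh).symm
          rw [h3 u t (fun heq => htu heq.symm) hEut hEtu]
          have hb := hBv u
          have hc := h1 u w huw
          linarith
    -- each coordinate other than w vanishes
    have hsum0 : ∑ t, x (k+1) t * (a t - a w) ≤ 0 := by
      have hexp : ∑ t, x (k+1) t * (a t - a w)
          = (∑ t, x (k+1) t * a t) - a w := by
        simp_rw [mul_sub]
        rw [Finset.sum_sub_distrib, ← Finset.sum_mul, hx1', one_mul]
      rw [hexp]; linarith
    have hnn : ∀ t ∈ Finset.univ, 0 ≤ x (k+1) t * (a t - a w) := by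
      intro t _
      rcases eq_or_ne t w with rfl | htw
      · simp
      · exact mul_nonneg (hx0' t) (sub_nonneg.mpr (le_of_lt (hgt t htw)))
    have hterm0 : ∀ t ∈ Finset.univ, x (k+1) t * (a t - a w) = 0 :=
      (Finset.sum_eq_zero_iff_of_nonneg hnn).mp
        (le_antisymm hsum0 (Finset.sum_nonneg hnn))
    have hzero : ∀ t, t ≠ w → x (k+1) t = 0 := by
      intro t htw
      rcases mul_eq_zero.mp (hterm0 t (Finset.mem_univ t)) with h' | h'
      · exact h'
      · exact absurd h' (ne_of_gt (sub_pos.mpr (hgt t htw)))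
    have hxw1 : x (k+1) w = 1 := by
      have h0 : ∑ t ∈ Finset.univ.erase w, x (k+1) t = 0 :=
        Finset.sum_eq_zero fun t ht => hzero t (Finset.ne_of_mem_erase ht)
      have := Finset.add_sum_erase Finset.univ (fun t => x (k+1) t) (Finset.mem_univ w)
      rw [h0, hx1'] at this
      linarith
    funext t
    rcases eq_or_ne t w with rfl | htw
    · rw [hxw1, he]; simp
    · rw [hzero t htw, he]; simp [Pi.single_apply, Ne.symm htw]
  intro k
  induction k with
  | zero => intro _; rw [hx0]
  | succ n ih =>
    intro hK
    exact step n (Nat.lt_of_succ_le hK) (ih (Nat.le_of_succ_le hK))
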